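/- Let k ≥ 4 and let G be a graph with m(G) < m₂(K_k) = (binom(k,2) − 1)/(k − 2). Then there exists an orientation of G in which every copy of the complete graph K_k contains a directed cycle; in particular, no orientation-copy of the transitive tournament TT_k appears in every orientation of G (i.e., G ↛ TT_k). -/

import Mathlib

/-- An orientation of a simple graph `G`: an assignment of a direction to each edge. -/
structure GraphOrientation {V : Type*} (G : SimpleGraph V) where
  adj : V → V → Prop
  le : ∀ {u v}, adj u v → G.Adj u v
  total : ∀ {u v}, G.Adj u v → adj u v ∨ adj v u
  asymm : ∀ {u v}, adj u v → ¬ adj v u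

lemma vec3_inj {k : ℕ} {i j l : Fin k} (hij : i ≠ j) (hjl : j ≠ l) (hli : l ≠ i) :
    Function.Injective (![i, j, l] : Fin 3 → Fin k) := by
  intro a b hab
  fin_cases a <;> fin_cases b <;> first
    | rfl
    | (simp only [Matrix.cons_val_zero, Matrix.cons_val_one, Matrix.head_cons,
        Matrix.cons_val_two, Matrix.tail_cons] at hab
       first
        | exact absurd hab hij
        | exact absurd hab hjl
        | exact absurd hab.symm hjl
        | exact absurd hab hli
        | exact absurd hab.symm hli
        | exact absurd hab.symm hij
        | exact absurd hab hli.symm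
        | exact absurd hab.symm hli.symm)

lemma vec3_cycle {α : Type*} (f : Fin 3 → α) {P : α → α → Prop}
    (h1 : P (f 0) (f 1)) (h2 : P (f 1) (f 2)) (h3 : P (f 2) (f 0)) :
    ∀ q : Fin 3, P (f q) (f (q + 1)) := by
  intro q
  fin_cases q
  · exact h1
  · exact h2
  · exact h3


section CliqueCycle
variable {V : Type*} (G : SimpleGraph V)



/-- A "bad" set: a (k-1)-clique inside N with no directed 3-cycle. -/
def IsBad (k : ℕ) (N : Finset V) (o' : V → V → Prop) (C : Finset V) : Prop :=
  C ⊆ N ∧ C.card = k - 1 ∧ (∀ a ∈ C, ∀ b ∈ C, a ≠ b → G.Adj a b) ∧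
    ¬ ∃ x ∈ C, ∃ y ∈ C, ∃ z ∈ C, o' x y ∧ o' y z ∧ o' z x

lemma choose_A (k : ℕ) (hk : 4 ≤ k) (N : Finset V) (hNk : N.card ≤ k)
    (o' : V → V → Prop)
    (hasymm : ∀ u w, o' u w → ¬ o' w u)
    (htot : ∀ u ∈ N, ∀ w ∈ N, u ≠ w → G.Adj u w → o' u w ∨ o' w u)
    (hcl : N.card = k → (∀ a ∈ N, ∀ b ∈ N, a ≠ b → G.Adj a b) →
      ∃ x ∈ N, ∃ y ∈ N, ∃ z ∈ N, o' x y ∧ o' y z ∧ o' z x) :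
    ∃ A : Finset V, A ⊆ N ∧ ∀ C, IsBad G k N o' C →
      ∃ a ∈ C, ∃ b ∈ C, a ∈ A ∧ b ∉ A ∧ o' a b := by
  classical
  by_cases hex : ∃ C, IsBad G k N o' C
  swap
  · exact ⟨∅, Finset.empty_subset N, fun C hC => absurd ⟨C, hC⟩ hex⟩
  obtain ⟨C₀, hC₀⟩ := hex
  have hsingle : ∀ c d : V, c ∈ N → c ≠ d → o' c d →
      (∀ C, IsBad G k N o' C → c ∈ C ∧ d ∈ C) →
      ∃ A : Finset V, A ⊆ N ∧ ∀ C, IsBad G k N o' C →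
        ∃ a ∈ C, ∃ b ∈ C, a ∈ A ∧ b ∉ A ∧ o' a b := by
    intro c d hcN hcd hocd hall
    refine ⟨{c}, by simpa using hcN, fun C hC => ?_⟩
    obtain ⟨h1, h2⟩ := hall C hC
    exact ⟨c, h1, d, h2, Finset.mem_singleton_self c, by simp [Ne.symm hcd], hocd⟩
  have hk1 : 3 ≤ k - 1 := by omega
  by_cases hcard : N.card = k
  swap
  · have hCN : ∀ C, IsBad G k N o' C → C = N := by
      intro C hC
      have h1 := Finset.card_le_card hC.1
      have h2 := hC.2.1
      exact Finset.eq_of_subset_of_card_le hC.1 (by omega)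
    have h3 : 2 ≤ C₀.card := by have := hC₀.2.1; omega
    obtain ⟨c, hc, d, hd, hcd⟩ := Finset.one_lt_card.mp h3
    have hadj : G.Adj c d := hC₀.2.2.1 c hc d hd hcd
    have hcN : c ∈ N := hC₀.1 hc
    have hdN : d ∈ N := hC₀.1 hd
    rcases htot c hcN d hdN hcd hadj with h | h
    · exact hsingle c d hcN hcd h (fun C hC => by
        rw [hCN C hC]; exact ⟨hcN, hdN⟩)
    · exact hsingle d c hdN (Ne.symm hcd) h (fun C hC => by
        rw [hCN C hC]; exact ⟨hdN, hcN⟩)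
  -- now N.card = k
  have hbad_erase : ∀ C, IsBad G k N o' C → ∃ v ∈ N, C = N.erase v := by
    intro C hC
    have hsub := hC.1
    have hcc : C.card = k - 1 := hC.2.1
    have : (N \ C).card = 1 := by
      rw [Finset.card_sdiff_of_subset hsub]; omega
    obtain ⟨v, hv⟩ := Finset.card_eq_one.mp this
    have hvN : v ∈ N := by
      have : v ∈ N \ C := hv ▸ Finset.mem_singleton_self v
      exact (Finset.mem_sdiff.mp this).1
    refine ⟨v, hvN, ?_⟩
    apply Finset.eq_of_subset_of_card_le
    · intro u hu
      rw [Finset.mem_erase]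
      constructor
      · rintro rfl
        have : u ∈ N \ C := hv ▸ Finset.mem_singleton_self u
        exact (Finset.mem_sdiff.mp this).2 hu
      · exact hsub hu
    · rw [Finset.card_erase_of_mem hvN]; omega
  set B : Finset V := N.filter (fun v => IsBad G k N o' (N.erase v)) with hB
  by_cases hBcard : B.card ≤ k - 2
  · have h2 : 2 ≤ (N \ B).card := by
      have h1 := Finset.card_sdiff_of_subset (Finset.filter_subset (fun v => IsBad G k N o' (N.erase v)) N)
      rw [← hB] at h1
      omega
    obtain ⟨c, hc, d, hd, hcd⟩ := Finset.one_lt_card.mp h2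
    have hcN : c ∈ N := (Finset.mem_sdiff.mp hc).1
    have hdN : d ∈ N := (Finset.mem_sdiff.mp hd).1
    have hmem : ∀ C, IsBad G k N o' C → c ∈ C ∧ d ∈ C := by
      intro C hC
      obtain ⟨v, hvN, rfl⟩ := hbad_erase C hC
      have hvB : v ∈ B := by
        rw [hB, Finset.mem_filter]
        exact ⟨hvN, hC⟩
      constructor
      · rw [Finset.mem_erase]
        exact ⟨fun h => (Finset.mem_sdiff.mp hc).2 (h ▸ hvB), hcN⟩
      · rw [Finset.mem_erase]
        exact ⟨fun h => (Finset.mem_sdiff.mp hd).2 (h ▸ hvB), hdN⟩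
    have hadj : G.Adj c d := by
      obtain ⟨h1, h2'⟩ := hmem C₀ hC₀
      exact hC₀.2.2.1 c h1 d h2' hcd
    rcases htot c hcN d hdN hcd hadj with h | h
    · exact hsingle c d hcN hcd h hmem
    · exact hsingle d c hdN (Ne.symm hcd) h (fun C hC => (hmem C hC).symm)
  push_neg at hBcard
  have hNclique : ∀ a ∈ N, ∀ b ∈ N, a ≠ b → G.Adj a b := by
    intro a ha b hb hab
    have hab2 : ({a, b} : Finset V).card ≤ 2 := by
      have h2a := Finset.card_insert_le a ({b} : Finset V)
      have h2c : ({b} : Finset V).card = 1 := Finset.card_singleton b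
      omega
    have : (B \ {a, b}).Nonempty := by
      rw [← Finset.card_pos]
      have h1 := Finset.card_sdiff_add_card B ({a, b} : Finset V)
      have h2 := Finset.card_le_card (Finset.subset_union_left (s₁ := B) (s₂ := ({a, b} : Finset V)))
      omega
    obtain ⟨v, hv⟩ := this
    rw [Finset.mem_sdiff] at hv
    have hvB := hv.1
    rw [hB, Finset.mem_filter] at hvB
    have hbad := hvB.2
    have hane : a ≠ v := fun h => hv.2 (by simp [h])
    have hbne : b ≠ v := fun h => hv.2 (by simp [h])
    exact hbad.2.2.1 a (Finset.mem_erase.mpr ⟨hane, ha⟩) b (Finset.mem_erase.mpr ⟨hbne, hb⟩) hab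
  obtain ⟨x, hx, y, hy, z, hz, hxy, hyz, hzx⟩ := hcl hcard hNclique
  have hirr : ∀ u, ¬ o' u u := fun u h => hasymm u u h h
  have hxyne : x ≠ y := fun h => hirr y (h ▸ hxy)
  have hyzne : y ≠ z := fun h => hirr z (h ▸ hyz)
  have hzxne : z ≠ x := fun h => hirr x (h ▸ hzx)
  have hbad3 : ∀ C, IsBad G k N o' C → C = N.erase x ∨ C = N.erase y ∨ C = N.erase z := by
    intro C hC
    obtain ⟨v, hvN, rfl⟩ := hbad_erase C hC
    by_contra hcon
    push_neg at hcon
    have hvx : v ≠ x := fun h => hcon.1 (by rw [h])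
    have hvy : v ≠ y := fun h => hcon.2.1 (by rw [h])
    have hvz : v ≠ z := fun h => hcon.2.2 (by rw [h])
    exact hC.2.2.2 ⟨x, Finset.mem_erase.mpr ⟨Ne.symm hvx, hx⟩,
      y, Finset.mem_erase.mpr ⟨Ne.symm hvy, hy⟩,
      z, Finset.mem_erase.mpr ⟨Ne.symm hvz, hz⟩, hxy, hyz, hzx⟩
  have hw : (N \ {x, y, z}).Nonempty := by
    rw [← Finset.card_pos]
    have hab3 : ({x, y, z} : Finset V).card ≤ 3 := by
      have h2a := Finset.card_insert_le x ({y, z} : Finset V)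
      have h2b := Finset.card_insert_le y ({z} : Finset V)
      have h2c : ({z} : Finset V).card = 1 := Finset.card_singleton z
      omega
    have h1 := Finset.card_sdiff_add_card N ({x, y, z} : Finset V)
    have h2 := Finset.card_le_card (Finset.subset_union_left (s₁ := N) (s₂ := ({x, y, z} : Finset V)))
    omega
  obtain ⟨w, hwmem⟩ := hw
  rw [Finset.mem_sdiff] at hwmem
  have hwN : w ∈ N := hwmem.1
  have hwx : w ≠ x := fun h => hwmem.2 (by simp [h])
  have hwy : w ≠ y := fun h => hwmem.2 (by simp [h])
  have hwz : w ≠ z := fun h => hwmem.2 (by simp [h])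
  have hdone : ∀ A : Finset V, A ⊆ N →
      (∃ a ∈ N.erase x, ∃ b ∈ N.erase x, a ∈ A ∧ b ∉ A ∧ o' a b) →
      (∃ a ∈ N.erase y, ∃ b ∈ N.erase y, a ∈ A ∧ b ∉ A ∧ o' a b) →
      (∃ a ∈ N.erase z, ∃ b ∈ N.erase z, a ∈ A ∧ b ∉ A ∧ o' a b) →
      ∃ A : Finset V, A ⊆ N ∧ ∀ C, IsBad G k N o' C →
        ∃ a ∈ C, ∃ b ∈ C, a ∈ A ∧ b ∉ A ∧ o' a b := by
    intro A hA h1 h2 h3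
    refine ⟨A, hA, fun C hC => ?_⟩
    rcases hbad3 C hC with rfl | rfl | rfl
    exacts [h1, h2, h3]
  have hme : ∀ u s : V, u ∈ N → u ≠ s → u ∈ N.erase s :=
    fun u s hu hus => Finset.mem_erase.mpr ⟨hus, hu⟩
  have hsub1 : ∀ a : V, a ∈ N → ({a} : Finset V) ⊆ N := by
    intro a ha u hu
    rw [Finset.mem_singleton.mp hu]; exact ha
  have hsub2 : ∀ a b : V, a ∈ N → b ∈ N → ({a, b} : Finset V) ⊆ N := by
    intro a b ha hb u hu
    rcases Finset.mem_insert.mp hu with h | h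
    · rw [h]; exact ha
    · rw [Finset.mem_singleton.mp h]; exact hb
  have hsub3 : ({x, y, z} : Finset V) ⊆ N := by
    intro u hu
    rcases Finset.mem_insert.mp hu with h | h
    · rw [h]; exact hx
    rcases Finset.mem_insert.mp h with h' | h'
    · rw [h']; exact hy
    · rw [Finset.mem_singleton.mp h']; exact hz
  rcases htot w hwN x hx hwx (hNclique w hwN x hx hwx) with h1 | h1 <;>
    rcases htot w hwN y hy hwy (hNclique w hwN y hy hwy) with h2 | h2 <;>
      rcases htot w hwN z hz hwz (hNclique w hwN z hz hwz) with h3 | h3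
  · -- w→x, w→y, w→z : A = {w}
    exact hdone {w} (hsub1 w hwN)
      ⟨w, hme w x hwN hwx, y, hme y x hy (Ne.symm hxyne), by simp, by simp [Ne.symm hwy], h2⟩
      ⟨w, hme w y hwN hwy, z, hme z y hz (Ne.symm hyzne), by simp, by simp [Ne.symm hwz], h3⟩
      ⟨w, hme w z hwN hwz, x, hme x z hx (Ne.symm hzxne), by simp, by simp [Ne.symm hwx], h1⟩
  · -- w→x, w→y, z→w : A = {w}
    exact hdone {w} (hsub1 w hwN)
      ⟨w, hme w x hwN hwx, y, hme y x hy (Ne.symm hxyne), by simp, by simp [Ne.symm hwy], h2⟩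
      ⟨w, hme w y hwN hwy, x, hme x y hx hxyne, by simp, by simp [Ne.symm hwx], h1⟩
      ⟨w, hme w z hwN hwz, x, hme x z hx (Ne.symm hzxne), by simp, by simp [Ne.symm hwx], h1⟩
  · -- w→x, y→w, w→z : A = {w}
    exact hdone {w} (hsub1 w hwN)
      ⟨w, hme w x hwN hwx, z, hme z x hz hzxne, by simp, by simp [Ne.symm hwz], h3⟩
      ⟨w, hme w y hwN hwy, z, hme z y hz (Ne.symm hyzne), by simp, by simp [Ne.symm hwz], h3⟩
      ⟨w, hme w z hwN hwz, x, hme x z hx (Ne.symm hzxne), by simp, by simp [Ne.symm hwx], h1⟩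
  · -- w→x, y→w, z→w : w beats x only : A = {y, w}
    exact hdone {y, w} (hsub2 y w hy hwN)
      ⟨y, hme y x hy (Ne.symm hxyne), z, hme z x hz hzxne,
        by simp, by simp [Ne.symm hyzne, Ne.symm hwz], hyz⟩
      ⟨w, hme w y hwN hwy, x, hme x y hx hxyne,
        by simp, by simp [hxyne, Ne.symm hwx], h1⟩
      ⟨w, hme w z hwN hwz, x, hme x z hx (Ne.symm hzxne),
        by simp, by simp [hxyne, Ne.symm hwx], h1⟩
  · -- x→w, w→y, w→z : A = {w}
    exact hdone {w} (hsub1 w hwN)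
      ⟨w, hme w x hwN hwx, y, hme y x hy (Ne.symm hxyne), by simp, by simp [Ne.symm hwy], h2⟩
      ⟨w, hme w y hwN hwy, z, hme z y hz (Ne.symm hyzne), by simp, by simp [Ne.symm hwz], h3⟩
      ⟨w, hme w z hwN hwz, y, hme y z hy hyzne, by simp, by simp [Ne.symm hwy], h2⟩
  · -- x→w, w→y, z→w : w beats y only : A = {z, w}
    exact hdone {z, w} (hsub2 z w hz hwN)
      ⟨w, hme w x hwN hwx, y, hme y x hy (Ne.symm hxyne),
        by simp, by simp [hyzne, Ne.symm hwy], h2⟩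
      ⟨z, hme z y hz (Ne.symm hyzne), x, hme x y hx hxyne,
        by simp, by simp [Ne.symm hzxne, Ne.symm hwx], hzx⟩
      ⟨w, hme w z hwN hwz, y, hme y z hy hyzne,
        by simp, by simp [hyzne, Ne.symm hwy], h2⟩
  · -- x→w, y→w, w→z : w beats z only : A = {x, w}
    exact hdone {x, w} (hsub2 x w hx hwN)
      ⟨w, hme w x hwN hwx, z, hme z x hz hzxne,
        by simp, by simp [hzxne, Ne.symm hwz], h3⟩
      ⟨w, hme w y hwN hwy, z, hme z y hz (Ne.symm hyzne),
        by simp, by simp [hzxne, Ne.symm hwz], h3⟩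
      ⟨x, hme x z hx (Ne.symm hzxne), y, hme y z hy hyzne,
        by simp, by simp [Ne.symm hxyne, Ne.symm hwy], hxy⟩
  · -- x→w, y→w, z→w : A = {x, y, z}
    exact hdone {x, y, z} hsub3
      ⟨y, hme y x hy (Ne.symm hxyne), w, hme w x hwN hwx,
        by simp, by simp [hwx, hwy, hwz], h2⟩
      ⟨z, hme z y hz (Ne.symm hyzne), w, hme w y hwN hwy,
        by simp, by simp [hwx, hwy, hwz], h3⟩
      ⟨x, hme x z hx (Ne.symm hzxne), w, hme w z hwN hwz,
        by simp, by simp [hwx, hwy, hwz], h1⟩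

end CliqueCycle


lemma aux_min_degree {V : Type*} [Fintype V] (k : ℕ) (hk : 4 ≤ k) (G : SimpleGraph V)
    (hm : ∀ J : G.Subgraph, J.verts.Nonempty →
      (J.edgeSet.ncard : ℚ) <
        (((k.choose 2 : ℚ) - 1) / ((k : ℚ) - 2)) * J.verts.ncard)
    (s : Finset V) (hs : s.Nonempty) :
    ∃ v ∈ s, ∀ N : Finset V, N ⊆ s → (∀ u ∈ N, G.Adj v u) → N.card ≤ k := by
  classical
  by_contra hcon
  push_neg at hcon
  set H : SimpleGraph V :=
    { Adj := fun u w => u ∈ s ∧ w ∈ s ∧ G.Adj u w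
      symm := by constructor; intro u w h; exact ⟨h.2.1, h.1, h.2.2.symm⟩
      loopless := by constructor; intro u h; exact G.loopless.irrefl u h.2.2 } with hH
  have hHadj : ∀ u w, H.Adj u w ↔ (u ∈ s ∧ w ∈ s ∧ G.Adj u w) := fun u w => Iff.rfl
  set J : G.Subgraph :=
    { verts := (s : Set V)
      Adj := H.Adj
      adj_sub := fun h => h.2.2
      edge_vert := fun h => h.1
      symm := H.symm } with hJ
  have hJe : J.edgeSet = H.edgeSet := by
    ext e
    induction e using Sym2.ind with
    | _ u w => simp [SimpleGraph.Subgraph.mem_edgeSet, SimpleGraph.mem_edgeSet]; exact Iff.rfl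
  have hJv : J.verts.ncard = s.card := by
    simp [hJ, Set.ncard_coe_finset]
  have hne : J.verts.Nonempty := by simpa [hJ] using hs
  have hlt := hm J hne
  have hfrac : (((k.choose 2 : ℚ) - 1) / ((k : ℚ) - 2)) = ((k : ℚ) + 1) / 2 := by
    have hk4 : (4 : ℚ) ≤ (k : ℚ) := by exact_mod_cast hk
    have h2 : (k : ℚ) - 2 ≠ 0 := by linarith
    rw [Nat.cast_choose_two]
    field_simp
    ring
  rw [hfrac, hJe, hJv] at hlt
  have hecard : H.edgeSet.ncard = H.edgeFinset.card := by
    rw [Set.ncard_eq_toFinset_card']; congr 1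
  have hsum := SimpleGraph.sum_degrees_eq_twice_card_edges H
  have hdeg : ∀ v ∈ s, k + 1 ≤ H.degree v := by
    intro v hv
    obtain ⟨N, hNs, hNadj, hNcard⟩ := hcon v hv
    have hsub : N ⊆ H.neighborFinset v := by
      intro u hu
      rw [SimpleGraph.mem_neighborFinset, hHadj]
      exact ⟨hv, hNs hu, hNadj u hu⟩
    have := Finset.card_le_card hsub
    rw [SimpleGraph.degree]
    omega
  have hsum2 : (k + 1) * s.card ≤ ∑ v : V, H.degree v := by
    calc (k+1) * s.card = ∑ _v ∈ s, (k+1) := by rw [Finset.sum_const]; ring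
    _ ≤ ∑ v ∈ s, H.degree v := Finset.sum_le_sum hdeg
    _ ≤ ∑ v : V, H.degree v := Finset.sum_le_sum_of_subset (Finset.subset_univ s)
  rw [hsum] at hsum2
  rw [hecard] at hlt
  have : ((k:ℚ) + 1) * s.card ≤ 2 * H.edgeFinset.card := by exact_mod_cast hsum2
  have hs0 : (0:ℚ) ≤ s.card := by positivity
  nlinarith [hlt]

section Build
variable {V : Type*} [Fintype V]

lemma build (k : ℕ) (hk : 4 ≤ k) (G : SimpleGraph V)
    (hm : ∀ J : G.Subgraph, J.verts.Nonempty →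
      (J.edgeSet.ncard : ℚ) <
        (((k.choose 2 : ℚ) - 1) / ((k : ℚ) - 2)) * J.verts.ncard) :
    ∀ n : ℕ, ∀ s : Finset V, s.card ≤ n → ∃ o : V → V → Prop,
      (∀ u w, o u w → u ∈ s ∧ w ∈ s ∧ G.Adj u w) ∧
      (∀ u ∈ s, ∀ w ∈ s, G.Adj u w → o u w ∨ o w u) ∧
      (∀ u w, o u w → ¬ o w u) ∧
      (∀ t : Finset V, t ⊆ s → t.card = k → (∀ a ∈ t, ∀ b ∈ t, a ≠ b → G.Adj a b) →
        ∃ x ∈ t, ∃ y ∈ t, ∃ z ∈ t, o x y ∧ o y z ∧ o z x) := by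
  classical
  intro n
  induction n with
  | zero =>
    intro s hs
    have hse : s = ∅ := Finset.card_eq_zero.mp (Nat.le_zero.mp hs)
    subst hse
    refine ⟨fun _ _ => False, by simp, by simp, by simp, ?_⟩
    intro t ht htc _
    have : t = ∅ := Finset.subset_empty.mp ht
    subst this
    simp at htc
    omega
  | succ n IH =>
    intro s hs
    rcases Finset.eq_empty_or_nonempty s with rfl | hne
    · exact IH ∅ (by simp)
    obtain ⟨v, hvs, hvdeg⟩ := aux_min_degree k hk G hm s hne
    set s' : Finset V := s.erase v with hs'
    have hs'card : s'.card ≤ n := by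
      rw [hs', Finset.card_erase_of_mem hvs]
      omega
    obtain ⟨o', ho'mem, ho'tot, ho'asymm, ho'cl⟩ := IH s' hs'card
    set N : Finset V := s'.filter (fun u => G.Adj v u) with hN
    have hNs' : N ⊆ s' := Finset.filter_subset _ _
    have hNmem : ∀ u, u ∈ N ↔ (u ∈ s' ∧ G.Adj v u) := by
      intro u; rw [hN, Finset.mem_filter]
    have hNk : N.card ≤ k := by
      apply hvdeg N
      · exact hNs'.trans (Finset.erase_subset v s)
      · intro u hu; exact ((hNmem u).mp hu).2
    have hvns' : v ∉ s' := Finset.notMem_erase v s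
    have hvnN : v ∉ N := fun h => hvns' (hNs' h)
    -- N is inside s', so o' is total on it
    have htotN : ∀ u ∈ N, ∀ w ∈ N, u ≠ w → G.Adj u w → o' u w ∨ o' w u := by
      intro u hu w hw _ hadj
      exact ho'tot u (hNs' hu) w (hNs' hw) hadj
    have hclN : N.card = k → (∀ a ∈ N, ∀ b ∈ N, a ≠ b → G.Adj a b) →
        ∃ x ∈ N, ∃ y ∈ N, ∃ z ∈ N, o' x y ∧ o' y z ∧ o' z x := by
      intro h1 h2
      exact ho'cl N hNs' h1 h2
    obtain ⟨A, hAN, hA⟩ := choose_A G k hk N hNk o' ho'asymm htotN hclN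
    set o : V → V → Prop :=
      fun u w => o' u w ∨ (u = v ∧ w ∈ A) ∨ (u ∈ N ∧ u ∉ A ∧ w = v) with ho
    have hs'subs : s' ⊆ s := Finset.erase_subset v s
    have ho's' : ∀ u w, o' u w → u ∈ s' ∧ w ∈ s' := by
      intro u w h
      exact ⟨(ho'mem u w h).1, (ho'mem u w h).2.1⟩
    refine ⟨o, ?_, ?_, ?_, ?_⟩
    · -- membership / adjacency
      intro u w h
      rcases h with h | ⟨rfl, hw⟩ | ⟨huN, _, rfl⟩
      · obtain ⟨h1, h2, h3⟩ := ho'mem u w h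
        exact ⟨hs'subs h1, hs'subs h2, h3⟩
      · have hwN := hAN hw
        exact ⟨hvs, hs'subs (hNs' hwN), ((hNmem w).mp hwN).2⟩
      · exact ⟨hs'subs (hNs' huN), hvs, (((hNmem u).mp huN).2).symm⟩
    · -- totality
      intro u hu w hw hadj
      by_cases huv : u = v
      · subst huv
        have hwne : w ≠ u := fun h => G.loopless.irrefl u (h ▸ hadj)
        have hwN : w ∈ N := (hNmem w).mpr ⟨Finset.mem_erase.mpr ⟨hwne, hw⟩, hadj⟩
        by_cases hwA : w ∈ A
        · exact Or.inl (Or.inr (Or.inl ⟨rfl, hwA⟩))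
        · exact Or.inr (Or.inr (Or.inr ⟨hwN, hwA, rfl⟩))
      · by_cases hwv : w = v
        · subst hwv
          have hune : u ≠ w := huv
          have huN : u ∈ N := (hNmem u).mpr ⟨Finset.mem_erase.mpr ⟨huv, hu⟩, hadj.symm⟩
          by_cases huA : u ∈ A
          · exact Or.inr (Or.inr (Or.inl ⟨rfl, huA⟩))
          · exact Or.inl (Or.inr (Or.inr ⟨huN, huA, rfl⟩))
        · have hus' : u ∈ s' := Finset.mem_erase.mpr ⟨huv, hu⟩
          have hws' : w ∈ s' := Finset.mem_erase.mpr ⟨hwv, hw⟩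
          rcases ho'tot u hus' w hws' hadj with h | h
          · exact Or.inl (Or.inl h)
          · exact Or.inr (Or.inl h)
    · -- asymmetry
      intro u w h1 h2
      rcases h1 with h1 | ⟨he1, hw1⟩ | ⟨huN1, hunA1, he1⟩ <;>
        rcases h2 with h2 | ⟨he2, hu2⟩ | ⟨hwN2, hwnA2, he2⟩
      · exact ho'asymm u w h1 h2
      · exact hvns' (he2 ▸ (ho's' u w h1).2)
      · exact hvns' (he2 ▸ (ho's' u w h1).1)
      · exact hvns' (he1 ▸ (ho's' w u h2).2)
      · exact hvnN (he2 ▸ (hAN hw1))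
      · exact hwnA2 hw1
      · exact hvns' (he1 ▸ (ho's' w u h2).1)
      · exact hunA1 hu2
      · exact hvnN (he2 ▸ huN1)
    · -- every k-clique has a 3-cycle
      intro t hts htc htcl
      by_cases hvt : v ∈ t
      · set C : Finset V := t.erase v with hC
        have hCt : C ⊆ t := Finset.erase_subset v t
        have hCN : C ⊆ N := by
          intro u hu
          have hut : u ∈ t := hCt hu
          have huv : u ≠ v := (Finset.mem_erase.mp hu).1
          refine (hNmem u).mpr ⟨Finset.mem_erase.mpr ⟨huv, hts hut⟩, ?_⟩
          exact htcl v hvt u hut (Ne.symm huv)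
        have hCcard : C.card = k - 1 := by
          rw [hC, Finset.card_erase_of_mem hvt, htc]
        have hCcl : ∀ a ∈ C, ∀ b ∈ C, a ≠ b → G.Adj a b :=
          fun a ha b hb hab => htcl a (hCt ha) b (hCt hb) hab
        by_cases hCcyc : ∃ x ∈ C, ∃ y ∈ C, ∃ z ∈ C, o' x y ∧ o' y z ∧ o' z x
        · obtain ⟨x, hx, y, hy, z, hz, c1, c2, c3⟩ := hCcyc
          exact ⟨x, hCt hx, y, hCt hy, z, hCt hz,
            Or.inl c1, Or.inl c2, Or.inl c3⟩
        · have hbad : IsBad G k N o' C := ⟨hCN, hCcard, hCcl, hCcyc⟩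
          obtain ⟨a, ha, b, hb, haA, hbA, hoab⟩ := hA C hbad
          refine ⟨v, hvt, a, hCt ha, b, hCt hb, ?_, ?_, ?_⟩
          · exact Or.inr (Or.inl ⟨rfl, haA⟩)
          · exact Or.inl hoab
          · exact Or.inr (Or.inr ⟨hCN hb, hbA, rfl⟩)
      · have hts' : t ⊆ s' := by
          intro u hu
          exact Finset.mem_erase.mpr ⟨fun h => hvt (h ▸ hu), hts hu⟩
        obtain ⟨x, hx, y, hy, z, hz, c1, c2, c3⟩ := ho'cl t hts' htc htcl
        exact ⟨x, hx, y, hy, z, hz, Or.inl c1, Or.inl c2, Or.inl c3⟩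


end Build

/-- Let `k ≥ 4` and let `G` be a graph with
`m(G) < m₂(K_k) = (C(k,2) - 1)/(k - 2)`.  Then `G` has an orientation in which every
copy of `K_k` contains a directed cycle; in particular, this orientation contains
no copy of the transitive tournament `TT_k`, i.e. `G ↛ TT_k`. -/
theorem not_oriented_ramsey_transitive_tournament {V : Type*} [Fintype V]
    (k : ℕ) (hk : 4 ≤ k) (G : SimpleGraph V)
    (hm : ∀ J : G.Subgraph, J.verts.Nonempty →
      (J.edgeSet.ncard : ℚ) <
        (((k.choose 2 : ℚ) - 1) / ((k : ℚ) - 2)) * J.verts.ncard) :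
    ∃ o : GraphOrientation G,
      (∀ f : Fin k → V, Function.Injective f →
        (∀ i j, i ≠ j → G.Adj (f i) (f j)) →
        ∃ (m : ℕ) (c : Fin (m + 3) → Fin k), Function.Injective c ∧
          ∀ i : Fin (m + 3), o.adj (f (c i)) (f (c (i + 1)))) ∧
      ¬ ∃ f : Fin k → V, Function.Injective f ∧
        ∀ i j : Fin k, i < j → o.adj (f i) (f j) := by
  classical
  obtain ⟨o, h1, h2, h3, h4⟩ :=
    build k hk G hm (Fintype.card V) Finset.univ (by rw [Finset.card_univ])
  have key : ∀ f : Fin k → V, Function.Injective f →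
      (∀ i j, i ≠ j → G.Adj (f i) (f j)) →
      ∃ (m : ℕ) (c : Fin (m + 3) → Fin k), Function.Injective c ∧
        ∀ q : Fin (m + 3), o (f (c q)) (f (c (q + 1))) := by
    intro f finj fadj
    have htc : (Finset.univ.image f).card = k := by
      rw [Finset.card_image_of_injective _ finj, Finset.card_univ, Fintype.card_fin]
    have htcl : ∀ a ∈ Finset.univ.image f, ∀ b ∈ Finset.univ.image f, a ≠ b → G.Adj a b := by
      intro a ha b hb hab
      obtain ⟨i, _, rfl⟩ := Finset.mem_image.mp ha
      obtain ⟨j, _, rfl⟩ := Finset.mem_image.mp hb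
      exact fadj i j (fun h => hab (h ▸ rfl))
    obtain ⟨x, hx, y, hy, z, hz, c1, c2, c3⟩ :=
      h4 (Finset.univ.image f) (Finset.subset_univ _) htc htcl
    obtain ⟨i, _, rfl⟩ := Finset.mem_image.mp hx
    obtain ⟨j, _, rfl⟩ := Finset.mem_image.mp hy
    obtain ⟨l, _, rfl⟩ := Finset.mem_image.mp hz
    have hij : i ≠ j := by rintro rfl; exact h3 _ _ c1 c1
    have hjl : j ≠ l := by rintro rfl; exact h3 _ _ c2 c2
    have hli : l ≠ i := by rintro rfl; exact h3 _ _ c3 c3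
    exact ⟨0, ![i, j, l], vec3_inj hij hjl hli,
      vec3_cycle (fun q : Fin 3 => f (![i, j, l] q)) c1 c2 c3⟩
  refine ⟨{ adj := o
            le := fun h => (h1 _ _ h).2.2
            total := fun h => h2 _ (Finset.mem_univ _) _ (Finset.mem_univ _) h
            asymm := fun h => h3 _ _ h }, key, ?_⟩
  rintro ⟨f, finj, htr⟩
  have fadj : ∀ i j, i ≠ j → G.Adj (f i) (f j) := by
    intro i j hij
    rcases lt_trichotomy i j with h | h | h
    · exact (h1 _ _ (htr i j h)).2.2
    · exact absurd h hij
    · exact ((h1 _ _ (htr j i h)).2.2).symm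
  obtain ⟨m, c, cinj, hcyc⟩ := key f finj fadj
  have hlt : ∀ q : Fin (m + 3), c q < c (q + 1) := by
    intro q
    rcases lt_trichotomy (c q) (c (q + 1)) with h | h | h
    · exact h
    · exfalso
      have hq : q = q + 1 := cinj h
      have hv : ((q : ℕ) + 1) % (m + 3) = (q : ℕ) := by
        conv_rhs => rw [hq]
        rw [Fin.add_def]
        simp
      have hq3 : (q : ℕ) < m + 3 := q.isLt
      rcases Nat.lt_or_ge ((q : ℕ) + 1) (m + 3) with h' | h'
      · rw [Nat.mod_eq_of_lt h'] at hv; omega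
      · have he : (q : ℕ) + 1 = m + 3 := by omega
        rw [he, Nat.mod_self] at hv
        omega
    · exact absurd (hcyc q) (fun hc => h3 _ _ hc (htr _ _ h))
  have hchain : ∀ j : ℕ, ∀ hj : j < m + 3, c 0 ≤ c ⟨j, hj⟩ := by
    intro j
    induction j with
    | zero => intro hj; exact le_of_eq (by congr)
    | succ j IHj =>
      intro hj
      have hj' : j < m + 3 := by omega
      have h1' := hlt ⟨j, hj'⟩
      have he : (⟨j, hj'⟩ : Fin (m + 3)) + 1 = ⟨j + 1, hj⟩ := by
        apply Fin.ext
        rw [Fin.add_def]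
        simp [Nat.mod_eq_of_lt hj]
      rw [he] at h1'
      exact le_trans (IHj hj') (le_of_lt h1')
  have hlast := hlt ⟨m + 2, by omega⟩
  have hlast0 : (⟨m + 2, by omega⟩ : Fin (m + 3)) + 1 = 0 := by
    apply Fin.ext
    rw [Fin.add_def]
    simp
  rw [hlast0] at hlast
  exact absurd (hchain (m + 2) (by omega)) (not_le.mpr hlast)
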